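/- If f(1+x) = Σ_{n=0}^N a_n x^n ∈ 1 + xF_p[x] is a polynomial endomorphism of the group of 1-units U = 1 + xF_p[[x]], then f(1+x) = (1+x)^N', i.e., f is the N'-th power map for some nonnegative integer N'. -/

import Mathlib

open PowerSeries

/-- Coefficientwise substitution of a power series `x` with zero constant term into `f`. -/
noncomputable def applySeries {R : Type*} [CommRing R] (f x : PowerSeries R) : PowerSeries R :=
  PowerSeries.mk fun k => ∑ n ∈ Finset.range (k + 1), coeff n f * coeff k (x ^ n)

/-- `f ∈ 1 + x R[[x]]` defines an endomorphism of the group of 1-units. -/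
def IsOneUnitEndo {R : Type*} [CommRing R] (f : PowerSeries R) : Prop :=
  constantCoeff f = 1 ∧
    ∀ u v : PowerSeries R, constantCoeff u = 1 → constantCoeff v = 1 →
      applySeries f (u * v - 1) = applySeries f (u - 1) * applySeries f (v - 1)

lemma myCoeff_one_add_X_pow {R : Type*} [CommRing R] (j m : ℕ) :
    coeff m ((1 + X) ^ j) = (j.choose m : R) := by
  have h : ((1 : R⟦X⟧) + X) = ((1 + Polynomial.X : Polynomial R) : R⟦X⟧) := by simp
  rw [h, ← Polynomial.coe_pow, Polynomial.coeff_coe, Polynomial.coeff_one_add_X_pow]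

lemma myCoeff_mul_eq_zero {R : Type*} [CommRing R] {u v : R⟦X⟧} {d e k : ℕ}
    (hu : ∀ j, d < j → coeff j u = 0) (hv : ∀ j, e < j → coeff j v = 0)
    (hk : d + e < k) : coeff k (u * v) = 0 := by
  rw [coeff_mul]
  apply Finset.sum_eq_zero
  rintro ⟨b, c⟩ hm
  rw [Finset.HasAntidiagonal.mem_antidiagonal] at hm
  rcases lt_or_ge d b with h | h
  · simp [hu b h]
  · have : e < c := by omega
    simp [hv c this]

lemma myCoeff_pow_eq_zero {R : Type*} [CommRing R] {u : R⟦X⟧} {d : ℕ}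
    (hu : ∀ j, d < j → coeff j u = 0) :
    ∀ n k, n * d < k → coeff k (u ^ n) = 0 := by
  intro n
  induction n with
  | zero => intro k hk; rw [pow_zero, coeff_one, if_neg (by omega)]
  | succ m ih =>
    intro k hk
    rw [pow_succ]
    have h2 : m * d + d = (m + 1) * d := by ring
    exact myCoeff_mul_eq_zero (fun j hj => ih j hj) hu (by omega)

lemma myApplySeries_X {R : Type*} [CommRing R] (f : R⟦X⟧) : applySeries f X = f := by
  ext k
  rw [applySeries, coeff_mk]
  rw [Finset.sum_eq_single_of_mem k (Finset.self_mem_range_succ k)]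
  · simp [coeff_X_pow]
  · intro n _ hn
    simp [coeff_X_pow, hn.symm]

/-- The key coefficient identity: comparing the coefficient of `X ^ (i + (N+1) * N)` in the
multiplicativity identity applied to `u = 1 + X`, `v = 1 + X ^ (N+1)` yields
`a_N * C(N, i) = a_i * a_N`, hence `a_i = C(N, i)`. -/
lemma key_lemma {p : ℕ} [Fact p.Prime] (f : PowerSeries (ZMod p))
    (a : ℕ → ZMod p) (ha : a = fun n => coeff n f) (N : ℕ)
    (hNne : a N ≠ 0) (hNtop : ∀ n, N < n → a n = 0)
    (hmul : ∀ u v : PowerSeries (ZMod p), constantCoeff u = 1 →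
      constantCoeff v = 1 →
      applySeries f (u * v - 1) = applySeries f (u - 1) * applySeries f (v - 1))
    (i : ℕ) (hi : i ≤ N) : a i = (N.choose i : ZMod p) := by
  set M := N + 1 with hM
  set K := i + M * N with hK
  clear_value M K
  have hNK : N ≤ M * N := by nlinarith
  have hNleK : N ≤ K := by omega
  have hu : constantCoeff (1 + X : (ZMod p)⟦X⟧) = 1 := by simp
  have hv : constantCoeff (1 + X ^ M : (ZMod p)⟦X⟧) = 1 := by
    rw [map_add, map_one, map_pow, constantCoeff_X, zero_pow (by omega : M ≠ 0), add_zero]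
  have heq := hmul (1 + X) (1 + X ^ M) hu hv
  have hs : ((1 : (ZMod p)⟦X⟧) + X) * (1 + X ^ M) - 1 = X + X ^ M * (1 + X) := by ring
  rw [hs, add_sub_cancel_left, add_sub_cancel_left, myApplySeries_X] at heq
  have hco := congrArg (coeff K) heq
  have hsb2 : ∀ j, M + 1 < j → coeff j (X ^ M * (1 + X) : (ZMod p)⟦X⟧) = 0 := by
    intro j hj
    rw [mul_one_add, ← pow_succ, map_add, coeff_X_pow, coeff_X_pow,
      if_neg (by omega), if_neg (by omega), add_zero]
  have hsb : ∀ j, M + 1 < j → coeff j (X + X ^ M * (1 + X) : (ZMod p)⟦X⟧) = 0 := by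
    intro j hj
    rw [map_add, coeff_X, if_neg (by omega), hsb2 j hj, add_zero]
  have hL : coeff K (applySeries f (X + X ^ M * (1 + X)))
      = a N * (N.choose i : ZMod p) := by
    rw [applySeries, coeff_mk]
    rw [Finset.sum_eq_single_of_mem N (Finset.mem_range.mpr (by omega))]
    · rw [show coeff N f = a N from by rw [ha]]
      congr 1
      rw [add_pow, map_sum]
      rw [Finset.sum_eq_single_of_mem 0 (Finset.mem_range.mpr (by omega))]
      · rw [pow_zero, one_mul, Nat.sub_zero, Nat.choose_zero_right, Nat.cast_one, mul_one,
          mul_pow, ← pow_mul]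
        rw [hK, coeff_X_pow_mul]
        exact myCoeff_one_add_X_pow N i
      · intro j hj hj0
        rw [Finset.mem_range] at hj
        have hj1 : 1 ≤ j := by omega
        rw [← map_natCast C (N.choose j), coeff_mul_C]
        have hzero : coeff K (X ^ j * (X ^ M * (1 + X)) ^ (N - j) : (ZMod p)⟦X⟧) = 0 := by
          apply myCoeff_mul_eq_zero (d := j) (e := (N - j) * (M + 1))
          · intro m hm
            rw [coeff_X_pow, if_neg (by omega)]
          · exact fun m hm => myCoeff_pow_eq_zero hsb2 (N - j) m hm
          · have ht : N - j + j = N := by omega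
            set t := N - j with htdef
            clear_value t
            nlinarith
        rw [hzero, zero_mul]
    · intro n hn hnN
      rw [Finset.mem_range] at hn
      rcases lt_or_ge N n with h | h
      · rw [show coeff n f = a n from by rw [ha], hNtop n h, zero_mul]
      · have hn' : n < N := by omega
        rw [myCoeff_pow_eq_zero hsb n K (by nlinarith), mul_zero]
  have hR : coeff K (f * applySeries f (X ^ M)) = a i * a N := by
    rw [coeff_mul]
    rw [Finset.sum_eq_single_of_mem (i, M * N) (Finset.HasAntidiagonal.mem_antidiagonal.mpr hK.symm)]
    · rw [show coeff i f = a i from by rw [ha]]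
      congr 1
      rw [applySeries, coeff_mk]
      rw [Finset.sum_eq_single_of_mem N (Finset.mem_range.mpr (by omega))]
      · rw [← pow_mul, coeff_X_pow, if_pos rfl, mul_one,
          show coeff N f = a N from by rw [ha]]
      · intro n _ hn
        rw [← pow_mul, coeff_X_pow, if_neg, mul_zero]
        intro hcn
        exact hn (Nat.eq_of_mul_eq_mul_left (by omega) hcn.symm)
    · rintro ⟨b, c⟩ hm hne
      rw [Finset.HasAntidiagonal.mem_antidiagonal] at hm
      rcases lt_or_ge N b with hb | hb
      · rw [show coeff b f = a b from by rw [ha], hNtop b hb, zero_mul]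
      · have hzero : coeff c (applySeries f (X ^ M)) = 0 := by
          rw [applySeries, coeff_mk]
          apply Finset.sum_eq_zero
          intro n hn
          rw [← pow_mul, coeff_X_pow, if_neg, mul_zero]
          intro hcn
          apply hne
          have hbM : b < M := by omega
          have hiM : i < M := by omega
          have h1 : (b + M * n) % M = (i + M * N) % M := by rw [← hcn, hm, hK]
          rw [Nat.add_mul_mod_self_left, Nat.add_mul_mod_self_left,
            Nat.mod_eq_of_lt hbM, Nat.mod_eq_of_lt hiM] at h1
          have h2 : M * n = M * N := by omega
          simp [Prod.ext_iff, h1, hcn, h2]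
        rw [hzero, mul_zero]
  rw [hL, hR] at hco
  exact (mul_right_cancel₀ hNne (show (N.choose i : ZMod p) * a N = a i * a N by
    linear_combination hco)).symm

/-- A polynomial endomorphism of the group of 1-units `1 + x F_p[[x]]` is a power map:
`f(1+x) = (1+x)^N'` for some nonnegative integer `N'`. -/
theorem polynomial_endo_is_power {p : ℕ} [Fact p.Prime]
    (f : PowerSeries (ZMod p)) (hf : IsOneUnitEndo f)
    (hpoly : ∃ N : ℕ, ∀ n > N, coeff n f = 0) :
    ∃ N' : ℕ, f = (1 + X) ^ N' := by
  obtain ⟨ha0, hmul⟩ := hf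
  obtain ⟨N0, hN0⟩ := hpoly
  set a : ℕ → ZMod p := fun n => coeff n f with ha
  have ha0' : a 0 = 1 := by
    simpa [ha, coeff_zero_eq_constantCoeff] using ha0
  set N := Nat.findGreatest (fun n => a n ≠ 0) N0 with hN
  have hNne : a N ≠ 0 := by
    have := Nat.findGreatest_spec (P := fun n => a n ≠ 0) (Nat.zero_le N0) (by simp [ha0'])
    exact this
  have hNtop : ∀ n, N < n → a n = 0 := by
    intro n hn
    rcases le_or_gt n N0 with h | h
    · have := Nat.findGreatest_is_greatest (P := fun n => a n ≠ 0) hn h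
      simpa using this
    · exact hN0 n h
  have key : ∀ i, i ≤ N → a i = (N.choose i : ZMod p) :=
    key_lemma f a ha N hNne hNtop hmul
  refine ⟨N, ?_⟩
  ext k
  rw [myCoeff_one_add_X_pow]
  rcases le_or_gt k N with h | h
  · exact key k h
  · rw [Nat.choose_eq_zero_of_lt h, Nat.cast_zero]
    exact hNtop k h
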